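/- Let Ω ⊆ ℂ be a domain with nonempty boundary and diam(Ω) > 0. Suppose Ω satisfies condition (Δ)_{2,β} for some β > 0: there exist constants ε ∈ (0,1), C > 0 and r₀ ∈ (0, 1/e) such that for every a ∈ ∂Ω, every r ∈ (0, r₀), every u ∈ F_{a,r}, and every z ∈ Ω with |z − a| = C·r·(log(1/r))^{−β}, one has u(z) ≤ 1 − ε. Then there exists β′ > β such that ∂Ω satisfies condition (U)_{2,β′}. -/

import Mathlib

open Metric Set

/-- A real function is harmonic on an open set `s ⊆ ℂ` iff it is continuous on
`s` and satisfies the circle mean-value property on every closed disc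
contained in `s`. -/
def HarmonicOn (u : ℂ → ℝ) (s : Set ℂ) : Prop :=
  ContinuousOn u s ∧ ∀ c : ℂ, ∀ ρ : ℝ, 0 < ρ → closedBall c ρ ⊆ s →
    u c = (1 / (2 * Real.pi)) *
      ∫ θ in (0 : ℝ)..(2 * Real.pi), u (c + ρ * Complex.exp (θ * Complex.I))

/-- The family `F_{a,r}` of competitors for the harmonic measure of
`∂D(a,r) ∩ Ω` in `Ω ∩ D(a,r)`. -/
def MemF (Ω : Set ℂ) (a : ℂ) (r : ℝ) (u : ℂ → ℝ) : Prop :=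
  HarmonicOn u (Ω ∩ ball a r) ∧
  (∀ z ∈ Ω ∩ ball a r, u z ≤ 1) ∧
  (∀ ζ ∈ frontier Ω ∩ ball a r,
    Filter.limsup u (nhdsWithin ζ (Ω ∩ ball a r)) ≤ 0)

/-- A set `E ⊆ ℂ` satisfies condition `(U)_{2,β}`. -/
def CondU2 (E : Set ℂ) (β : ℝ) : Prop :=
  ∃ C > (0 : ℝ), ∃ r₀ > (0 : ℝ), ∀ a ∈ E, ∀ r ∈ Set.Ioo (0 : ℝ) r₀,
    ({z : ℂ | C * r * (Real.log (1 / r)) ^ (-β) ≤ dist z a ∧ dist z a ≤ r} ∩ E).Nonempty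

/- ### Auxiliary lemmas -/

lemma distBall {a c z : ℂ} {R : ℝ} (ha : a ∉ closedBall c R) (hz : z ∈ closedBall c R) :
    0 < ‖z - a‖ := by
  have h1 : R < dist a c := by simpa [Metric.mem_closedBall, not_le] using ha
  have h2 : dist z c ≤ R := by simpa [Metric.mem_closedBall] using hz
  have : z ≠ a := by
    intro h; rw [h] at h2; linarith [h2.trans_lt h1]
  simpa [Complex.dist_eq, dist_pos] using sub_ne_zero.mpr this

/-- Circle mean-value property of `log |z - a|` on circles not enclosing `a`. -/
lemma logAbsMean (a c : ℂ) {R : ℝ} (hR : 0 < R) (ha : a ∉ closedBall c R) :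
    ∫ θ in (0:ℝ)..(2*Real.pi), Real.log (‖c + R * Complex.exp (θ * Complex.I) - a‖)
      = 2 * Real.pi * Real.log (‖c - a‖) := by
  have hca : R < ‖c - a‖ := by
    have h1 : R < dist a c := by simpa [Metric.mem_closedBall, not_le] using ha
    rw [Complex.dist_eq] at h1
    rwa [← norm_neg, neg_sub]
  have hca0 : c - a ≠ 0 := by
    intro h; rw [h] at hca; simp at hca; linarith
  have hcaPos : 0 < ‖c - a‖ := hR.trans hca
  set f : ℂ → ℂ := fun z => Complex.log ((z - a) / (c - a)) with hf
  have hmem : ∀ z ∈ closedBall c R, (z - a) / (c - a) ∈ Complex.slitPlane := by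
    intro z hz
    rw [Complex.mem_slitPlane_iff]
    left
    have h1 : ‖(z - a) / (c - a) - 1‖ < 1 := by
      have he : (z - a) / (c - a) - 1 = (z - c) / (c - a) := by
        field_simp
        ring
      rw [he, norm_div, div_lt_one hcaPos]
      calc ‖z - c‖ ≤ R := by
            rw [← Complex.dist_eq]; simpa [Metric.mem_closedBall] using hz
        _ < ‖c - a‖ := hca
    have h2 : |((z - a) / (c - a) - 1).re| < 1 :=
      lt_of_le_of_lt (Complex.abs_re_le_norm _) h1
    have h3 := (abs_lt.mp h2).1
    simp only [Complex.sub_re, Complex.one_re] at h3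
    linarith
  have hd : DifferentiableOn ℂ f (closedBall c R) := by
    intro z hz
    apply DifferentiableAt.differentiableWithinAt
    exact (Complex.differentiableAt_log (hmem z hz)).comp z
      (show DifferentiableAt ℂ (fun z => (z - a) / (c - a)) z by fun_prop)
  have hcauchy := hd.circleIntegral_sub_inv_smul (Metric.mem_ball_self hR)
  have hfc : f c = 0 := by simp [hf, div_self hca0]
  rw [hfc, smul_zero, circleIntegral] at hcauchy
  have hint : ∀ θ : ℝ, deriv (circleMap c R) θ • ((circleMap c R θ - c)⁻¹ • f (circleMap c R θ))
      = Complex.I * f (circleMap c R θ) := by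
    intro θ
    rw [deriv_circleMap, circleMap_sub_center]
    have h0 : circleMap 0 R θ ≠ 0 := circleMap_ne_center hR.ne'
    field_simp [smul_eq_mul]
    rw [smul_eq_mul, smul_eq_mul, ← mul_assoc, mul_assoc _ Complex.I, mul_comm Complex.I,
      ← mul_assoc, mul_one_div_cancel h0, one_mul]
  simp only [hint] at hcauchy
  have hcont : Continuous fun θ : ℝ => f (circleMap c R θ) :=
    hd.continuousOn.comp_continuous (continuous_circleMap c R)
      (fun θ => circleMap_mem_closedBall c hR.le θ)
  have hinteg : IntervalIntegrable (fun θ : ℝ => f (circleMap c R θ))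
      MeasureTheory.volume 0 (2*Real.pi) := hcont.intervalIntegrable _ _
  rw [intervalIntegral.integral_const_mul] at hcauchy
  have hzero : ∫ θ in (0:ℝ)..(2*Real.pi), f (circleMap c R θ) = 0 := by
    rcases mul_eq_zero.mp hcauchy with h | h
    · exact absurd h Complex.I_ne_zero
    · exact h
  have hre : ∫ θ in (0:ℝ)..(2*Real.pi), (f (circleMap c R θ)).re = 0 := by
    have := Complex.reCLM.intervalIntegral_comp_comm hinteg
    rw [hzero] at this
    simpa using this
  have hre2 : ∀ θ : ℝ, (f (circleMap c R θ)).re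
      = Real.log (‖c + R * Complex.exp (θ * Complex.I) - a‖)
        - Real.log (‖c - a‖) := by
    intro θ
    have hzb : circleMap c R θ ∈ closedBall c R := circleMap_mem_closedBall c hR.le θ
    have hpos := distBall ha hzb
    rw [hf]
    simp only [Complex.log_re, norm_div]
    rw [Real.log_div hpos.ne' hcaPos.ne']
    congr 3
  simp only [hre2] at hre
  have hic : Continuous fun θ : ℝ =>
      Real.log (‖c + R * Complex.exp (θ * Complex.I) - a‖) := by
    have : (fun θ : ℝ => Real.log (‖c + R * Complex.exp (θ * Complex.I) - a‖))
        = fun θ : ℝ => (f (circleMap c R θ)).re + Real.log (‖c - a‖) := by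
      funext θ; rw [hre2 θ]; ring
    rw [this]
    exact (Complex.continuous_re.comp hcont).add continuous_const
  rw [intervalIntegral.integral_sub (hic.intervalIntegrable _ _)
    (intervalIntegrable_const)] at hre
  rw [intervalIntegral.integral_const] at hre
  simp only [smul_eq_mul, sub_zero] at hre
  linarith [hre]

/-- The function `z ↦ (log|z-a| - p)/q` is harmonic on any set avoiding `a`. -/
lemma harmonicLogAbs (a : ℂ) (p q : ℝ) (s : Set ℂ) (ha : a ∉ s) :
    HarmonicOn (fun z => (Real.log (‖z - a‖) - p) / q) s := by
  constructor
  · apply ContinuousOn.div_const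
    apply ContinuousOn.sub _ continuousOn_const
    apply ContinuousOn.log
    · exact (continuous_norm.comp (by fun_prop)).continuousOn
    · intro z hz
      have : z ≠ a := fun h => ha (h ▸ hz)
      simpa [sub_eq_zero] using this
  · intro c ρ hρ hsub
    have haB : a ∉ closedBall c ρ := fun h => ha (hsub h)
    have hmean := logAbsMean a c hρ haB
    have hic : Continuous fun θ : ℝ =>
        Real.log (‖c + ρ * Complex.exp (θ * Complex.I) - a‖) := by
      apply Continuous.log
      · exact continuous_norm.comp (by fun_prop)
      · intro θ
        have hzb : c + ρ * Complex.exp (θ * Complex.I) ∈ closedBall c ρ := by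
          simp only [Metric.mem_closedBall, Complex.dist_eq]
          have : c + ρ * Complex.exp (θ * Complex.I) - c = ρ * Complex.exp (θ * Complex.I) := by
            ring
          rw [this]
          simp [Complex.norm_exp_ofReal_mul_I, abs_of_pos hρ, le_refl]
        exact (distBall haB hzb).ne'
    have h1 : ∫ θ in (0:ℝ)..(2*Real.pi),
        (Real.log (‖c + ρ * Complex.exp (θ * Complex.I) - a‖) - p) / q
        = ((2 * Real.pi * Real.log (‖c - a‖)) - (2 * Real.pi) * p) / q := by
      rw [intervalIntegral.integral_div]
      congr 1
      rw [intervalIntegral.integral_sub (hic.intervalIntegrable _ _) intervalIntegrable_const,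
        hmean, intervalIntegral.integral_const]
      simp [smul_eq_mul]
    rw [h1]
    have hpi : (2 * Real.pi) ≠ 0 := by positivity
    have h2 : 2 * Real.pi * Real.log (‖c - a‖) - 2 * Real.pi * p
        = (2 * Real.pi) * (Real.log (‖c - a‖) - p) := by ring
    rw [h2, mul_div_assoc, one_div, inv_mul_cancel_left₀ hpi]

theorem stmt_12 (Ω : Set ℂ) (hopen : IsOpen Ω) (hconn : IsConnected Ω)
    (hbd : (frontier Ω).Nonempty) (hdiam : 0 < EMetric.diam Ω)
    (β ε C r₀ : ℝ) (hβ : 0 < β) (hε : ε ∈ Set.Ioo (0 : ℝ) 1)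
    (hC : 0 < C) (hr₀ : r₀ ∈ Set.Ioo (0 : ℝ) (Real.exp 1)⁻¹)
    (hΔ : ∀ a ∈ frontier Ω, ∀ r ∈ Set.Ioo (0 : ℝ) r₀, ∀ u : ℂ → ℝ,
      MemF Ω a r u → ∀ z ∈ Ω,
        dist z a = C * r * (Real.log (1 / r)) ^ (-β) → u z ≤ 1 - ε) :
    ∃ β' > β, CondU2 (frontier Ω) β' := by
  obtain ⟨hε0, hε1⟩ := hε
  obtain ⟨hr₀0, hr₀e⟩ := hr₀
  obtain ⟨w₁, hw₁, w₂, hw₂, hww⟩ := EMetric.diam_pos_iff.mp hdiam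
  set D := dist w₁ w₂ with hDdef
  have hD : 0 < D := dist_pos.mpr hww
  set β' := β / ε + β + 1 with hβ'def
  have hβ'β : β' > β := by
    have : 0 < β / ε := by positivity
    simp only [hβ'def]; linarith
  have hβ'pos : 0 < β' := hβ.trans hβ'β
  set K : ℝ := max (max ((ε - 1) * Real.log C / (ε * (β + 1))) (Real.log C / β')) 1 with hKdef
  have hK1 : 1 ≤ K := le_max_right _ _
  refine ⟨β', hβ'β, C, hC, min r₀ (min (D / (2 * C)) (Real.exp (-Real.exp K))), ?_, ?_⟩
  · have : 0 < Real.exp (-Real.exp K) := Real.exp_pos _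
    have : 0 < D / (2 * C) := by positivity
    simp only [lt_min_iff]
    exact ⟨hr₀0, by positivity, Real.exp_pos _⟩
  intro a ha r hr
  by_contra hcon
  rw [Set.not_nonempty_iff_eq_empty] at hcon
  obtain ⟨hrpos, hrlt⟩ := hr
  have hrr₀ : r < r₀ := lt_of_lt_of_le hrlt (min_le_left _ _)
  have hrD : r < D / (2 * C) := lt_of_lt_of_le hrlt ((min_le_right _ _).trans (min_le_left _ _))
  have hrK : r < Real.exp (-Real.exp K) :=
    lt_of_lt_of_le hrlt ((min_le_right _ _).trans (min_le_right _ _))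
  set L := Real.log (1 / r) with hLdef
  have hLgt : Real.exp K < L := by
    rw [hLdef, one_div, Real.log_inv]
    have := Real.log_lt_log hrpos hrK
    rw [Real.log_exp] at this
    linarith
  have hLpos : 0 < L := (Real.exp_pos K).trans hLgt
  have hlogL : K < Real.log L := (Real.lt_log_iff_exp_lt hLpos).mpr hLgt
  have hlogL1 : 1 < Real.log L := lt_of_le_of_lt hK1 hlogL
  have hL1 : 1 < L := by
    have := Real.add_one_le_exp K
    linarith [hLgt, hK1]
  -- the two radii
  set ρ := C * r * L ^ (-β') with hρdef
  set ρ₁ := C * r * L ^ (-β) with hρ₁def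
  have hρpos : 0 < ρ := by
    have : (0:ℝ) < L ^ (-β') := Real.rpow_pos_of_pos hLpos _
    positivity
  have hρ₁pos : 0 < ρ₁ := by
    have : (0:ℝ) < L ^ (-β) := Real.rpow_pos_of_pos hLpos _
    positivity
  have hlogρ : Real.log ρ = Real.log C + Real.log r + (-β') * Real.log L := by
    rw [hρdef, Real.log_mul (by positivity) (Real.rpow_pos_of_pos hLpos _).ne',
      Real.log_mul hC.ne' hrpos.ne', Real.log_rpow hLpos]
  have hlogρ₁ : Real.log ρ₁ = Real.log C + Real.log r + (-β) * Real.log L := by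
    rw [hρ₁def, Real.log_mul (by positivity) (Real.rpow_pos_of_pos hLpos _).ne',
      Real.log_mul hC.ne' hrpos.ne', Real.log_rpow hLpos]
  have hlogCβ' : Real.log C < β' * Real.log L := by
    have h1 : Real.log C / β' ≤ K := le_trans (le_max_right _ _) (le_max_left _ _)
    have h2 := (div_le_iff₀ hβ'pos).mp h1
    have h3 := mul_lt_mul_of_pos_right hlogL hβ'pos
    linarith
  have hρr : ρ < r := by
    rw [← Real.exp_log hρpos, ← Real.exp_log hrpos]
    apply Real.exp_lt_exp.mpr
    rw [hlogρ]
    linarith [hlogCβ']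
  set q := Real.log r - Real.log ρ with hqdef
  have hq : 0 < q := by
    rw [hqdef]
    have := Real.log_lt_log hρpos hρr
    linarith
  have haΩ : a ∉ Ω := by
    rw [hopen.frontier_eq] at ha
    exact ha.2
  -- boundary points near a are within ρ
  have hfr : ∀ ζ ∈ frontier Ω, dist ζ a ≤ r → dist ζ a < ρ := by
    intro ζ hζ hζr
    by_contra hge
    push_neg at hge
    have : ζ ∈ ({z : ℂ | C * r * (Real.log (1 / r)) ^ (-β') ≤ dist z a ∧ dist z a ≤ r}
        ∩ frontier Ω) := ⟨⟨hge, hζr⟩, hζ⟩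
    rw [hcon] at this
    exact this
  -- the competitor function
  set u : ℂ → ℝ := fun z => (Real.log (‖z - a‖) - Real.log ρ) / q with hudef
  have haS : a ∉ Ω ∩ ball a r := fun h => haΩ h.1
  have hMemF : MemF Ω a r u := by
    refine ⟨harmonicLogAbs a (Real.log ρ) q _ haS, ?_, ?_⟩
    · intro z hz
      have hz0 : 0 < ‖z - a‖ := by
        have hne : z ≠ a := fun h => haΩ (h ▸ hz.1)
        exact norm_pos_iff.mpr (sub_ne_zero.mpr hne)
      have hzr : ‖z - a‖ < r := by
        have := hz.2
        rwa [mem_ball, Complex.dist_eq] at this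
      rw [hudef, div_le_one hq, hqdef]
      have := Real.log_le_log hz0 hzr.le
      linarith
    · intro ζ hζ
      have hζρ : dist ζ a < ρ := hfr ζ hζ.1 (le_of_lt (mem_ball.mp hζ.2))
      have hev : ∀ᶠ z in nhdsWithin ζ (Ω ∩ ball a r), u z ≤ 0 := by
        have hball : ball a ρ ∈ nhds ζ := isOpen_ball.mem_nhds (mem_ball.mpr hζρ)
        filter_upwards [mem_nhdsWithin_of_mem_nhds hball, self_mem_nhdsWithin] with z hz1 hz2
        have hz0 : 0 < ‖z - a‖ := by
          have hne : z ≠ a := fun h => haΩ (h ▸ hz2.1)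
          have : z - a ≠ 0 := sub_ne_zero.mpr hne
          exact norm_pos_iff.mpr this
        have hzρ : ‖z - a‖ < ρ := by
          have := mem_ball.mp hz1
          rwa [Complex.dist_eq] at this
        have := Real.log_lt_log hz0 hzρ
        rw [hudef]
        apply div_nonpos_of_nonpos_of_nonneg _ hq.le
        linarith
      rw [Filter.limsup_eq]
      by_cases hb : BddBelow {t : ℝ | ∀ᶠ n in nhdsWithin ζ (Ω ∩ ball a r), u n ≤ t}
      · exact csInf_le hb hev
      · rw [Real.sInf_of_not_bddBelow hb]
  -- find z ∈ Ω with dist z a = ρ₁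
  have hρ₁D : ρ₁ < D / 2 := by
    have h1 : L ^ (-β) ≤ 1 :=
      Real.rpow_le_one_of_one_le_of_nonpos hL1.le (by linarith)
    have h2 : ρ₁ ≤ C * r := by
      rw [hρ₁def]
      calc C * r * L ^ (-β) ≤ C * r * 1 :=
            mul_le_mul_of_nonneg_left h1 (by positivity)
        _ = C * r := mul_one _
    have : C * r < C * (D / (2 * C)) := by
      exact mul_lt_mul_of_pos_left hrD hC
    have hCD : C * (D / (2 * C)) = D / 2 := by field_simp
    linarith [hCD ▸ this]
  have haCl : a ∈ closure Ω := frontier_subset_closure ha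
  obtain ⟨z₁, hz₁Ω, hz₁d⟩ := Metric.mem_closure_iff.mp haCl ρ₁ hρ₁pos
  have hz₁ : dist z₁ a < ρ₁ := by rwa [dist_comm] at hz₁d
  have hw : ∃ w ∈ Ω, D / 2 ≤ dist w a := by
    have htri : D ≤ dist w₁ a + dist w₂ a := by
      calc D = dist w₁ w₂ := hDdef
        _ ≤ dist w₁ a + dist a w₂ := dist_triangle _ _ _
        _ = dist w₁ a + dist w₂ a := by rw [dist_comm a w₂]
    by_cases hcase : D / 2 ≤ dist w₁ a
    · exact ⟨w₁, hw₁, hcase⟩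
    · exact ⟨w₂, hw₂, by push_neg at hcase; linarith⟩
  obtain ⟨w, hwΩ, hwd⟩ := hw
  have hIVT := hconn.isPreconnected.intermediate_value hz₁Ω hwΩ
    (f := fun z => dist z a) ((continuous_id.dist continuous_const).continuousOn)
  have hρ₁mem : ρ₁ ∈ Icc (dist z₁ a) (dist w a) := ⟨hz₁.le, hρ₁D.le.trans hwd⟩
  obtain ⟨z, hzΩ, hzd⟩ := hIVT hρ₁mem
  have hzd' : dist z a = ρ₁ := by simpa using hzd
  -- apply the Δ condition
  have huz := hΔ a ha r ⟨hrpos, hrr₀⟩ u hMemF z hzΩ (by rw [hzd'])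
  -- contradiction
  have habs : ‖z - a‖ = ρ₁ := by rw [← Complex.dist_eq, hzd']
  rw [hudef] at huz
  simp only [habs] at huz
  have huz' : Real.log ρ₁ - Real.log ρ ≤ (1 - ε) * q := by
    have := (div_le_iff₀ hq).mp huz
    linarith
  have hεβ' : ε * β' = β + ε * β + ε := by
    rw [hβ'def]
    field_simp
  have hKM : (ε - 1) * Real.log C / (ε * (β + 1)) ≤ K :=
    ((le_max_left _ _).trans (le_max_left _ _))
  have hM : (ε - 1) * Real.log C < ε * (β + 1) * Real.log L := by
    have h1 := (div_le_iff₀ (by positivity : (0:ℝ) < ε * (β + 1))).mp hKM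
    have h2 := mul_lt_mul_of_pos_right hlogL (by positivity : (0:ℝ) < ε * (β + 1))
    linarith
  rw [hlogρ₁, hlogρ, hqdef, hlogρ] at huz'
  have h5 : ε * β' * Real.log L = (β + ε * β + ε) * Real.log L := by rw [hεβ']
  have key : ε * (β + 1) * Real.log L ≤ (ε - 1) * Real.log C := by
    linarith [huz', h5]
  linarith [hM, key]
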